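/- Let N = 2m and let Z be the N-by-N block matrix [[0, I_m], [-I_m, 0]], and for an N-by-N complex matrix X define its dual X^♯ = -Z Xᵀ Z. Suppose U is an N-by-N unitary matrix that is self-dual, i.e. U^♯ = U. Then there exists an N-by-N Hermitian matrix H that is self-dual (H^♯ = H) such that exp(-iH) = U. -/

import Mathlib

open Matrix

/-- The matrix `Z = [[0, I], [-I, 0]]` on `ℂ^(m ⊕ m)`. -/
noncomputable def Zmat (m : ℕ) : Matrix (Fin m ⊕ Fin m) (Fin m ⊕ Fin m) ℂ :=
  Matrix.fromBlocks 0 1 (-1) 0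

/-- The dual `X^♯ = -Z Xᵀ Z` of a `2m × 2m` complex matrix. -/
noncomputable def dual {m : ℕ} (X : Matrix (Fin m ⊕ Fin m) (Fin m ⊕ Fin m) ℂ) :
    Matrix (Fin m ⊕ Fin m) (Fin m ⊕ Fin m) ℂ :=
  -(Zmat m * Xᵀ * Zmat m)

section Aux

variable {m : ℕ}

lemma Zmat_mul_Zmat (m : ℕ) : Zmat m * Zmat m = -1 := by
  simp [Zmat, Matrix.fromBlocks_multiply, Matrix.fromBlocks_neg,
    ← Matrix.fromBlocks_one]

lemma Zmat_mul_Zmat_mul (m : ℕ) (A : Matrix (Fin m ⊕ Fin m) (Fin m ⊕ Fin m) ℂ) :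
    Zmat m * (Zmat m * A) = -A := by
  rw [← Matrix.mul_assoc, Zmat_mul_Zmat, neg_one_mul]

lemma dual_mul (X Y : Matrix (Fin m ⊕ Fin m) (Fin m ⊕ Fin m) ℂ) :
    dual (X * Y) = dual Y * dual X := by
  simp only [dual, Matrix.transpose_mul, neg_mul_neg, Matrix.mul_assoc,
    Zmat_mul_Zmat_mul]
  simp [Matrix.mul_neg]

lemma dual_one : dual (1 : Matrix (Fin m ⊕ Fin m) (Fin m ⊕ Fin m) ℂ) = 1 := by
  simp [dual, Zmat_mul_Zmat]

lemma dual_smul (c : ℂ) (X : Matrix (Fin m ⊕ Fin m) (Fin m ⊕ Fin m) ℂ) :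
    dual (c • X) = c • dual X := by
  simp [dual, Matrix.transpose_smul, Matrix.smul_mul, Matrix.mul_smul]

lemma dual_add (X Y : Matrix (Fin m ⊕ Fin m) (Fin m ⊕ Fin m) ℂ) :
    dual (X + Y) = dual X + dual Y := by
  simp only [dual, Matrix.transpose_add, Matrix.add_mul, Matrix.mul_add, neg_add]

lemma dual_pow (X : Matrix (Fin m ⊕ Fin m) (Fin m ⊕ Fin m) ℂ) (k : ℕ) :
    dual (X ^ k) = dual X ^ k := by
  induction k with
  | zero => simpa using dual_one
  | succ k ih =>
    rw [pow_succ, dual_mul, ih, pow_succ']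

lemma dual_aeval (X : Matrix (Fin m ⊕ Fin m) (Fin m ⊕ Fin m) ℂ)
    (hX : dual X = X) (p : Polynomial ℂ) :
    dual (Polynomial.aeval X p) = Polynomial.aeval X p := by
  induction p using Polynomial.induction_on' with
  | add p q hp hq => rw [map_add, dual_add, hp, hq]
  | monomial n c =>
    rw [Polynomial.aeval_monomial]
    have : (algebraMap ℂ (Matrix (Fin m ⊕ Fin m) (Fin m ⊕ Fin m) ℂ)) c * X ^ n
        = c • X ^ n := by
      rw [Algebra.smul_def]
    rw [this, dual_smul, dual_pow, hX]

open scoped Matrix.Norms.L2Operator in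
noncomputable instance matrixCStar (m : ℕ) :
    CStarAlgebra (Matrix (Fin m ⊕ Fin m) (Fin m ⊕ Fin m) ℂ) := { }

end Aux

/-- Every self-dual unitary `U` has a logarithm of the form `-iH` with `H`
Hermitian and self-dual: `exp(-iH) = U`. -/
theorem selfDual_unitary_has_selfDual_hermitian_log
    (m : ℕ) (U : Matrix (Fin m ⊕ Fin m) (Fin m ⊕ Fin m) ℂ)
    (hU : Uᴴ * U = 1) (hdual : dual U = U) :
    ∃ H : Matrix (Fin m ⊕ Fin m) (Fin m ⊕ Fin m) ℂ,
      Hᴴ = H ∧ dual H = H ∧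
      NormedSpace.exp (-(Complex.I • H)) = U := by
  classical
  have hU2 : U * Uᴴ = 1 := mul_eq_one_comm.mp hU
  have hUu : U ∈ unitary (Matrix (Fin m ⊕ Fin m) (Fin m ⊕ Fin m) ℂ) := by
    constructor
    · simpa [Matrix.star_eq_conjTranspose] using hU
    · simpa [Matrix.star_eq_conjTranspose] using hU2
  have hN : IsStarNormal U := by
    constructor
    rw [Matrix.star_eq_conjTranspose, Commute, SemiconjBy, hU, hU2]
  have hfin : (spectrum ℂ U).Finite := Matrix.finite_spectrum U
  have hcont : ∀ g : ℂ → ℂ, ContinuousOn g (spectrum ℂ U) := fun g => hfin.continuousOn g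
  set f : ℂ → ℂ := fun z => -(Complex.arg z : ℂ) with hf
  refine ⟨cfc f U, ?_, ?_, ?_⟩
  · -- Hermitian
    rw [← Matrix.star_eq_conjTranspose, ← cfc_star]
    congr 1
    funext z
    simp [hf, Complex.star_def, Complex.conj_ofReal]
  · -- self-dual
    have hs : Set.InjOn id (hfin.toFinset : Set ℂ) := Function.injective_id.injOn
    set p := Lagrange.interpolate hfin.toFinset id f with hp
    have hfp : (spectrum ℂ U).EqOn f p.eval := by
      intro z hz
      exact (Lagrange.eval_interpolate_at_node f hs (hfin.mem_toFinset.mpr hz)).symm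
    rw [cfc_congr hfp, cfc_polynomial p U hN]
    exact dual_aeval U hdual p
  · -- exponential
    have h1 : -(Complex.I • cfc f U) =
        cfc (fun z => Complex.I * (Complex.arg z : ℂ)) U := by
      rw [← cfc_smul Complex.I f U (hcont f), ← cfc_neg]
      congr 1
      funext z
      simp [hf, smul_eq_mul]
    rw [h1]
    have hN2 : IsStarNormal (cfc (fun z => Complex.I * (Complex.arg z : ℂ)) U) :=
      cfc_predicate _ U
    rw [← CFC.complex_exp_eq_normedSpace_exp hN2,
      ← cfc_comp' Complex.exp (fun z => Complex.I * (Complex.arg z : ℂ)) U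
        Complex.continuous_exp.continuousOn (hcont _)]
    have h2 : (spectrum ℂ U).EqOn (fun z => Complex.exp (Complex.I * (Complex.arg z : ℂ)))
        id := by
      intro z hz
      have habs : ‖z‖ = 1 := by
        simpa using spectrum.subset_circle_of_unitary hUu hz
      have := Complex.norm_mul_exp_arg_mul_I z
      rw [habs] at this
      simpa [mul_comm] using this
    rw [cfc_congr h2, cfc_id ℂ U]
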